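/- Let E be a separable Banach space and (X_i)_{i ≥ 1} a sequence of i.i.d. random elements of E on a probability space (Ω,F,P). Let α ∈ (0,1) and c > 0. Assume that P(‖X₁‖ > x) > 0 for all x > 0, that the tail of ‖X₁‖ is regularly varying of index −α (i.e., for every λ > 0, P(‖X₁‖ > λx)/P(‖X₁‖ > x) → λ^{−α} as x → ∞), and that (a_n)_{n ≥ 1} is a sequence of positive reals with a_n → ∞ and n·P(‖X₁‖ > a_n) → c as n → ∞. Then for every δ > 0 and T > 0: lim_{ε ↓ 0} limsup_{n → ∞} P( max_{1 ≤ k ≤ ⌊nT⌋} ‖ (1/a_n) Σ_{i=1}^{k} X_i 1_{{‖X_i‖ ≤ a_n ε}} ‖ > δ ) = 0. -/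

import Mathlib

open MeasureTheory ProbabilityTheory Filter Set Topology

/-- Karamata-type upper bound: if an antitone `q ≤ 1` satisfies a doubling-type
decay `(x/2) q(x/2) ≤ θ · x q(x)` for `x ≥ x₁` with `θ < 1`, then
`∫_0^x q ≤ C · x q(x)` for `x ≥ x₁`. -/
lemma karamata_upper (q : ℝ → ENNReal) (hq_anti : Antitone q)
    (hq_le_one : ∀ t, q t ≤ 1)
    (θ : ℝ) (hθ0 : 0 < θ) (hθ1 : θ < 1) (x₁ : ℝ) (hx₁ : 0 < x₁)
    (hq_pos : 0 < q (2 * x₁))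
    (hdub : ∀ x, x₁ ≤ x → ENNReal.ofReal (x / 2) * q (x / 2)
      ≤ ENNReal.ofReal θ * (ENNReal.ofReal x * q x)) :
    ∃ C : ENNReal, C ≠ ⊤ ∧ ∀ x, x₁ ≤ x →
      (∫⁻ t in Ioc (0:ℝ) x, q t) ≤ C * (ENNReal.ofReal x * q x) := by
  set g : ℝ → ENNReal := fun x => ENNReal.ofReal x * q x with hg
  set H : ℝ → ENNReal := fun x => ∫⁻ t in Ioc (0:ℝ) x, q t with hH
  have hq_meas : Measurable q := hq_anti.measurable
  have hHmono : ∀ ⦃x y : ℝ⦄, x ≤ y → H x ≤ H y := by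
    intro x y hxy
    exact lintegral_mono_set (Ioc_subset_Ioc le_rfl hxy)
  have hHsplit : ∀ x : ℝ, 0 < x → H x ≤ H (x / 2) + g (x / 2) := by
    intro x hx
    have h1 : Ioc (0:ℝ) (x/2) ∪ Ioc (x/2) x = Ioc 0 x :=
      Ioc_union_Ioc_eq_Ioc (by linarith) (by linarith)
    have h2 : H x = H (x/2) + ∫⁻ t in Ioc (x/2) x, q t := by
      show (∫⁻ t in Ioc (0:ℝ) x, q t) = _
      rw [← h1, lintegral_union measurableSet_Ioc (by simp [Set.disjoint_left]; intro t h1 h2; exact fun h => absurd h (not_lt.2 h2))]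
    rw [h2]
    gcongr
    calc ∫⁻ t in Ioc (x/2) x, q t ≤ ∫⁻ _ in Ioc (x/2) x, q (x/2) :=
          setLIntegral_mono' measurableSet_Ioc (fun t ht => hq_anti ht.1.le)
      _ = q (x/2) * ENNReal.ofReal (x - x/2) := by
          rw [setLIntegral_const, Real.volume_Ioc]
      _ = g (x/2) := by
          rw [hg, mul_comm]
          norm_num
          congr 1
          ring
  -- the "base" positivity constant
  set m : ENNReal := ENNReal.ofReal x₁ * q (2 * x₁) with hm
  have hm0 : m ≠ 0 := by
    rw [hm]
    exact (ENNReal.mul_pos (by simpa using hx₁) hq_pos.ne').ne'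
  have hmtop : m ≠ ⊤ := by
    rw [hm]
    exact ENNReal.mul_ne_top ENNReal.ofReal_ne_top (lt_of_le_of_lt (hq_le_one _) (by norm_num)).ne
  have hθd : (0:ℝ) < 1 - θ := by linarith
  have hθfrac : (0:ℝ) ≤ θ / (1 - θ) := div_nonneg hθ0.le hθd.le
  have hkey : θ * (θ / (1 - θ)) + θ = θ / (1 - θ) := by
    field_simp
    ring
  -- main induction
  have hind : ∀ k : ℕ, ∀ x : ℝ, x₁ ≤ x → x ≤ 2 ^ k * x₁ →
      (H x ≤ H x₁ + ENNReal.ofReal (θ / (1 - θ)) * g x ∧ m ≤ g x) := by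
    intro k
    induction k with
    | zero =>
      intro x hx1 hx2
      simp only [pow_zero, one_mul] at hx2
      have hxeq : x = x₁ := le_antisymm hx2 hx1
      subst hxeq
      constructor
      · exact le_add_right le_rfl
      · rw [hm, hg]
        exact mul_le_mul' le_rfl (hq_anti (by linarith))
    | succ k ih =>
      intro x hx1 hx2
      by_cases hc2 : x ≤ 2 * x₁
      · -- direct case: x₁ ≤ x ≤ 2 x₁
        constructor
        · have h1 : H x ≤ H (x/2) + g (x/2) := hHsplit x (by linarith)
          have h2 : H (x/2) ≤ H x₁ := hHmono (by linarith)
          have h3 : g (x/2) ≤ ENNReal.ofReal θ * g x := hdub x hx1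
          have h4' : θ ≤ θ / (1 - θ) := by
            rw [le_div_iff₀ hθd]
            nlinarith
          have h4 : ENNReal.ofReal θ * g x ≤ ENNReal.ofReal (θ / (1 - θ)) * g x :=
            mul_le_mul' (ENNReal.ofReal_le_ofReal h4') le_rfl
          calc H x ≤ H (x/2) + g (x/2) := h1
            _ ≤ H x₁ + ENNReal.ofReal (θ / (1 - θ)) * g x := add_le_add h2 (h3.trans h4)
        · rw [hm, hg]
          exact mul_le_mul' (ENNReal.ofReal_le_ofReal hx1) (hq_anti hc2)
      · -- x > 2 x₁ : use induction hypothesis at x/2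
        push_neg at hc2
        have hx1' : x₁ ≤ x / 2 := by linarith
        have hx2' : x / 2 ≤ 2 ^ k * x₁ := by
          rw [pow_succ] at hx2; linarith
        obtain ⟨ihH, ihm⟩ := ih (x/2) hx1' hx2'
        have h3 : g (x/2) ≤ ENNReal.ofReal θ * g x := hdub x hx1
        have hθle : ENNReal.ofReal θ * g x ≤ g x := by
          nth_rewrite 2 [← one_mul (g x)]
          gcongr
          exact ENNReal.ofReal_le_one.2 hθ1.le
        constructor
        · have h1 : H x ≤ H (x/2) + g (x/2) := hHsplit x (by linarith)
          calc H x ≤ H (x/2) + g (x/2) := h1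
            _ ≤ (H x₁ + ENNReal.ofReal (θ / (1 - θ)) * g (x/2)) + g (x/2) := by gcongr
            _ ≤ (H x₁ + ENNReal.ofReal (θ / (1 - θ)) * (ENNReal.ofReal θ * g x))
                + ENNReal.ofReal θ * g x := by gcongr
            _ = H x₁ + (ENNReal.ofReal (θ / (1 - θ)) * ENNReal.ofReal θ
                + ENNReal.ofReal θ) * g x := by ring
            _ = H x₁ + ENNReal.ofReal (θ / (1 - θ)) * g x := by
                rw [← ENNReal.ofReal_mul hθfrac, ← ENNReal.ofReal_add (by positivity) hθ0.le]
                rw [mul_comm (θ / (1-θ)) θ, hkey]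
        · exact ihm.trans (h3.trans hθle)
  -- conclude
  have hHx₁top : H x₁ ≠ ⊤ := by
    have : H x₁ ≤ ∫⁻ _ in Ioc (0:ℝ) x₁, (1 : ENNReal) :=
      setLIntegral_mono' measurableSet_Ioc (fun t _ => hq_le_one t)
    rw [setLIntegral_const, Real.volume_Ioc, one_mul] at this
    exact (this.trans_lt ENNReal.ofReal_lt_top).ne
  refine ⟨H x₁ * m⁻¹ + ENNReal.ofReal (θ / (1 - θ)), ?_, ?_⟩
  · exact ENNReal.add_ne_top.2 ⟨ENNReal.mul_ne_top hHx₁top (ENNReal.inv_ne_top.2 hm0),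
      ENNReal.ofReal_ne_top⟩
  · intro x hx
    obtain ⟨k, hk⟩ := pow_unbounded_of_one_lt (x / x₁) (one_lt_two (α := ℝ))
    have hxk : x ≤ 2 ^ k * x₁ := by
      rw [div_lt_iff₀ hx₁] at hk
      linarith
    obtain ⟨h1, h2⟩ := hind k x hx hxk
    have : H x₁ ≤ H x₁ * m⁻¹ * g x := by
      calc H x₁ = H x₁ * m⁻¹ * m := by
            rw [mul_assoc, ENNReal.inv_mul_cancel hm0 hmtop, mul_one]
        _ ≤ H x₁ * m⁻¹ * g x := by gcongr
    calc (∫⁻ t in Ioc (0:ℝ) x, q t) = H x := rfl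
      _ ≤ H x₁ + ENNReal.ofReal (θ / (1 - θ)) * g x := h1
      _ ≤ H x₁ * m⁻¹ * g x + ENNReal.ofReal (θ / (1 - θ)) * g x := by gcongr
      _ = (H x₁ * m⁻¹ + ENNReal.ofReal (θ / (1 - θ))) * g x := by ring

lemma trunc_lintegral_le {Ω : Type*} [MeasurableSpace Ω] (P : Measure Ω)
    (g : Ω → ℝ) (hg : Measurable g) (hg0 : ∀ ω, 0 ≤ g ω) (u : ℝ) (hu : 0 < u) :
    ∫⁻ ω, ENNReal.ofReal (if g ω ≤ u then g ω else 0) ∂P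
      ≤ ∫⁻ t in Ioc (0:ℝ) u, P {ω | t < g ω} := by
  set f : Ω → ℝ := fun ω => if g ω ≤ u then g ω else 0 with hf
  have hfm : Measurable f := Measurable.ite (measurableSet_le hg measurable_const) hg measurable_const
  have hf0 : 0 ≤ᵐ[P] f := Filter.Eventually.of_forall (fun ω => by
    by_cases h : g ω ≤ u <;> simp [hf, h, hg0 ω])
  have hlc := lintegral_eq_lintegral_meas_lt P hf0 hfm.aemeasurable
  rw [hlc]
  have hsplit : Ioi (0:ℝ) = Ioc 0 u ∪ Ioi u := (Ioc_union_Ioi_eq_Ioi hu.le).symm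
  rw [hsplit, lintegral_union measurableSet_Ioi (by
    simp [Set.disjoint_left])]
  have h2 : (∫⁻ t in Ioi u, P {a | t < f a}) = 0 := by
    have : ∀ t ∈ Ioi u, P {a | t < f a} = 0 := by
      intro t ht
      convert measure_empty
      · ext a
        simp only [mem_setOf_eq, mem_empty_iff_false, iff_false, not_lt]
        by_cases h : g a ≤ u
        · simp [hf, h]; linarith [mem_Ioi.1 ht]
        · simp [hf, h]; linarith [mem_Ioi.1 ht]
      · infer_instance
    refine le_antisymm ?_ zero_le
    calc (∫⁻ t in Ioi u, P {a | t < f a}) ≤ ∫⁻ _ in Ioi u, 0 :=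
          setLIntegral_mono' measurableSet_Ioi (fun t ht => le_of_eq (this t ht))
      _ = 0 := by simp
  rw [h2, add_zero]
  exact setLIntegral_mono' measurableSet_Ioc (fun t _ =>
    measure_mono (fun a ha => by
      simp only [mem_setOf_eq] at ha ⊢
      by_cases h : g a ≤ u
      · simpa [hf, h] using ha
      · simp [hf, h] at ha; linarith [hg0 a]))

/-- Let `(Xᵢ)` be i.i.d. random elements of a separable Banach space `E`
whose norm has a regularly varying tail of index `-α` with `α ∈ (0,1)`, and let
`(aₙ)` satisfy `aₙ → ∞` and `n P(‖X₁‖ > aₙ) → c`. Then the small-jump sums are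
asymptotically negligible: for all `δ, T > 0`,
`lim_{ε↓0} limsup_n P( max_{1 ≤ k ≤ ⌊nT⌋} ‖ aₙ⁻¹ Σ_{i=1}^k Xᵢ 1{‖Xᵢ‖ ≤ aₙ ε} ‖ > δ ) = 0`. -/
theorem small_jumps_negligible_alpha_lt_one
    {E : Type*} [NormedAddCommGroup E] [NormedSpace ℝ E] [CompleteSpace E]
    [TopologicalSpace.SeparableSpace E] [MeasurableSpace E] [BorelSpace E]
    {Ω : Type*} [MeasurableSpace Ω] (P : Measure Ω) [IsProbabilityMeasure P]
    (X : ℕ → Ω → E) (hXmeas : ∀ i, Measurable (X i))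
    (hXindep : iIndepFun X P)
    (hXident : ∀ i, Measure.map (X i) P = Measure.map (X 0) P)
    (α : ℝ) (hα0 : 0 < α) (hα1 : α < 1) (c : ℝ) (hc : 0 < c)
    (htail_pos : ∀ x : ℝ, 0 < x → 0 < P {ω | x < ‖X 0 ω‖})
    (hRV : ∀ l : ℝ, 0 < l →
      Tendsto (fun x : ℝ =>
          (P {ω | l * x < ‖X 0 ω‖}).toReal / (P {ω | x < ‖X 0 ω‖}).toReal)
        atTop (nhds (l ^ (-α))))
    (a : ℕ → ℝ) (ha_pos : ∀ n, 0 < a n) (ha_inf : Tendsto a atTop atTop)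
    (ha_c : Tendsto (fun n : ℕ => (n : ℝ) * (P {ω | a n < ‖X 0 ω‖}).toReal)
      atTop (nhds c)) :
    ∀ δ : ℝ, 0 < δ → ∀ T : ℝ, 0 < T →
      Tendsto (fun ε : ℝ =>
          Filter.limsup (fun n : ℕ =>
            P {ω | ∃ k : ℕ, 1 ≤ k ∧ k ≤ Nat.floor ((n : ℝ) * T) ∧
              δ < ‖(a n)⁻¹ • ∑ i ∈ Finset.range k,
                (if ‖X i ω‖ ≤ a n * ε then X i ω else 0)‖}) atTop)
        (nhdsWithin 0 (Set.Ioi 0)) (nhds 0) := by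
  intro δ hδ T hT
  -- the tail function
  set pE : ℝ → ENNReal := fun x => P {ω | x < ‖X 0 ω‖} with hpE
  have hpE_anti : Antitone pE := by
    intro s t hst
    exact measure_mono (fun ω hω => lt_of_le_of_lt hst hω)
  have hpE_le_one : ∀ t, pE t ≤ 1 := fun t => prob_le_one
  have hpE_ne_top : ∀ t, pE t ≠ ⊤ := fun t => (lt_of_le_of_lt (hpE_le_one t) (by norm_num)).ne
  have hpE_pos : ∀ t, 0 < t → 0 < pE t := htail_pos
  have hpE_toReal_pos : ∀ t, 0 < t → 0 < (pE t).toReal := fun t ht =>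
    ENNReal.toReal_pos (hpE_pos t ht).ne' (hpE_ne_top t)
  -- Step D : n · pE(s aₙ) → c s^(-α)
  have hD : ∀ s : ℝ, 0 < s →
      Tendsto (fun n : ℕ => (n : ℝ) * (pE (s * a n)).toReal) atTop (nhds (c * s ^ (-α))) := by
    intro s hs
    have h1 : Tendsto (fun n : ℕ => (pE (s * a n)).toReal / (pE (a n)).toReal)
        atTop (nhds (s ^ (-α))) := (hRV s hs).comp ha_inf
    have h2 := ha_c.mul h1
    refine h2.congr (fun n => ?_)
    have hne : (pE (a n)).toReal ≠ 0 := (hpE_toReal_pos _ (ha_pos n)).ne'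
    field_simp
    ring
  -- doubling estimate
  set L : ℝ := (2:ℝ) ^ α with hL
  have hL1 : 1 ≤ L := by
    rw [hL, ← Real.rpow_zero 2]
    exact Real.rpow_le_rpow_of_exponent_le (by norm_num) hα0.le
  have hL2 : L < 2 := by
    rw [hL]
    nth_rewrite 2 [← Real.rpow_one 2]
    exact Real.rpow_lt_rpow_of_exponent_lt (by norm_num) hα1
  set K : ℝ := (L + 2) / 2 with hK
  have hKL : L < K := by rw [hK]; linarith
  have hK2 : K < 2 := by rw [hK]; linarith
  have hK0 : 0 < K := by rw [hK]; linarith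
  set θ : ℝ := K / 2 with hθ
  have hθ0 : 0 < θ := by rw [hθ]; linarith
  have hθ1 : θ < 1 := by rw [hθ]; linarith
  have hhalf : ((2:ℝ)⁻¹) ^ (-α) = L := by
    rw [hL, ← Real.rpow_neg_one (2:ℝ), ← Real.rpow_mul (by norm_num : (0:ℝ) ≤ 2)]
    norm_num
  have hdub_ev : ∀ᶠ x : ℝ in atTop, ENNReal.ofReal (x / 2) * pE (x / 2)
      ≤ ENNReal.ofReal θ * (ENNReal.ofReal x * pE x) := by
    have h1 := hRV 2⁻¹ (by norm_num)
    rw [hhalf] at h1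
    have h2 : ∀ᶠ x : ℝ in atTop,
        (pE (2⁻¹ * x)).toReal / (pE x).toReal < K := h1.eventually (gt_mem_nhds hKL)
    filter_upwards [h2, eventually_gt_atTop 0] with x hx hx0
    have hpx : 0 < (pE x).toReal := hpE_toReal_pos x hx0
    have h3 : (pE (2⁻¹ * x)).toReal < K * (pE x).toReal := by
      rw [div_lt_iff₀ hpx] at hx
      exact hx
    have h4 : pE (x / 2) ≤ ENNReal.ofReal K * pE x := by
      have : x / 2 = 2⁻¹ * x := by ring
      rw [this, ← ENNReal.ofReal_toReal (hpE_ne_top (2⁻¹ * x)),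
        ← ENNReal.ofReal_toReal (hpE_ne_top x), ← ENNReal.ofReal_mul hK0.le]
      exact ENNReal.ofReal_le_ofReal h3.le
    calc ENNReal.ofReal (x / 2) * pE (x / 2)
        ≤ ENNReal.ofReal (x / 2) * (ENNReal.ofReal K * pE x) := by gcongr
      _ = ENNReal.ofReal (x / 2 * K) * pE x := by
          rw [ENNReal.ofReal_mul (by linarith : (0:ℝ) ≤ x / 2), mul_assoc]
      _ = ENNReal.ofReal θ * (ENNReal.ofReal x * pE x) := by
          rw [← mul_assoc, ← ENNReal.ofReal_mul hθ0.le]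
          congr 2
          rw [hθ]; ring
  obtain ⟨x₀, hx₀⟩ := eventually_atTop.1 hdub_ev
  set x₁ : ℝ := max x₀ 1 with hx₁def
  have hx₁ : 0 < x₁ := lt_of_lt_of_le one_pos (le_max_right _ _)
  -- Karamata constant
  obtain ⟨C, hCtop, hC⟩ := karamata_upper pE hpE_anti hpE_le_one θ hθ0 hθ1 x₁ hx₁
    (hpE_pos _ (by linarith)) (fun x hx => hx₀ x (le_trans (le_max_left _ _) hx))
  -- the measurable truncation map
  have hψmeas : ∀ u : ℝ, Measurable (fun y : E => if ‖y‖ ≤ u then y else 0) := fun u =>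
    Measurable.ite (measurableSet_le measurable_norm measurable_const)
      measurable_id measurable_const
  -- key bound for fixed ε
  have hkey : ∀ ε : ℝ, 0 < ε →
      Filter.limsup (fun n : ℕ =>
        P {ω | ∃ k : ℕ, 1 ≤ k ∧ k ≤ Nat.floor ((n : ℝ) * T) ∧
          δ < ‖(a n)⁻¹ • ∑ i ∈ Finset.range k,
            (if ‖X i ω‖ ≤ a n * ε then X i ω else 0)‖}) atTop
      ≤ C * ENNReal.ofReal (T * ε / δ * (2 * c * ε ^ (-α))) := by
    intro ε hε
    have hεα : 0 < c * ε ^ (-α) := mul_pos hc (Real.rpow_pos_of_pos hε _)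
    have hev1 : ∀ᶠ n : ℕ in atTop, x₁ ≤ a n * ε := by
      filter_upwards [ha_inf.eventually (eventually_ge_atTop (x₁ / ε))] with n hn
      rw [div_le_iff₀ hε] at hn
      exact hn
    have hev2 : ∀ᶠ n : ℕ in atTop,
        (n : ℝ) * (pE (ε * a n)).toReal ≤ 2 * c * ε ^ (-α) := by
      have := (hD ε hε).eventually (gt_mem_nhds (by linarith : c * ε ^ (-α) < 2 * c * ε ^ (-α)))
      filter_upwards [this] with n hn using hn.le
    apply Filter.limsup_le_of_le (by isBoundedDefault)
    filter_upwards [hev1, hev2] with n han1 han2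
    set u : ℝ := a n * ε with hudef
    have hu : 0 < u := mul_pos (ha_pos n) hε
    set m : ℕ := Nat.floor ((n : ℝ) * T) with hmdef
    set Z : ℕ → Ω → E := fun i ω => if ‖X i ω‖ ≤ u then X i ω else 0 with hZ
    have hZmeas : ∀ i, Measurable (fun ω => ENNReal.ofReal ‖Z i ω‖) := fun i =>
      ENNReal.measurable_ofReal.comp (measurable_norm.comp ((hψmeas u).comp (hXmeas i)))
    set S : Ω → ENNReal := fun ω => ∑ i ∈ Finset.range m, ENNReal.ofReal ‖Z i ω‖ with hS
    have hSmeas : Measurable S := Finset.measurable_sum _ (fun i _ => hZmeas i)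
    -- inclusion into the Markov event
    have hsub : {ω | ∃ k : ℕ, 1 ≤ k ∧ k ≤ m ∧
        δ < ‖(a n)⁻¹ • ∑ i ∈ Finset.range k, Z i ω‖}
        ⊆ {ω | ENNReal.ofReal (δ * a n) ≤ S ω} := by
      rintro ω ⟨k, hk1, hk2, hk3⟩
      have hnorm : δ * a n < ‖∑ i ∈ Finset.range k, Z i ω‖ := by
        rw [norm_smul, Real.norm_eq_abs, abs_of_pos (inv_pos.2 (ha_pos n)),
          inv_mul_eq_div, lt_div_iff₀ (ha_pos n)] at hk3
        linarith
      have hsum : δ * a n ≤ ∑ i ∈ Finset.range m, ‖Z i ω‖ := by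
        calc δ * a n ≤ ∑ i ∈ Finset.range k, ‖Z i ω‖ :=
              hnorm.le.trans (norm_sum_le _ _)
          _ ≤ ∑ i ∈ Finset.range m, ‖Z i ω‖ :=
              Finset.sum_le_sum_of_subset_of_nonneg (Finset.range_subset_range.2 hk2)
                (fun i _ _ => norm_nonneg _)
      show ENNReal.ofReal (δ * a n) ≤ S ω
      calc ENNReal.ofReal (δ * a n) ≤ ENNReal.ofReal (∑ i ∈ Finset.range m, ‖Z i ω‖) :=
            ENNReal.ofReal_le_ofReal hsum
        _ = S ω := ENNReal.ofReal_sum_of_nonneg (fun i _ => norm_nonneg _)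
    -- Markov
    have hδa : (0:ℝ) < δ * a n := mul_pos hδ (ha_pos n)
    have hmarkov : P {ω | ∃ k : ℕ, 1 ≤ k ∧ k ≤ m ∧
        δ < ‖(a n)⁻¹ • ∑ i ∈ Finset.range k, Z i ω‖}
        ≤ (∫⁻ ω, S ω ∂P) / ENNReal.ofReal (δ * a n) :=
      (measure_mono hsub).trans (meas_ge_le_lintegral_div hSmeas.aemeasurable
        (ENNReal.ofReal_pos.2 hδa).ne' ENNReal.ofReal_ne_top)
    -- identical distribution
    have heach : ∀ i : ℕ, (∫⁻ ω, ENNReal.ofReal ‖Z i ω‖ ∂P)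
        = ∫⁻ ω, ENNReal.ofReal ‖Z 0 ω‖ ∂P := by
      intro i
      have hφ : Measurable (fun y : E => ENNReal.ofReal ‖if ‖y‖ ≤ u then y else 0‖) :=
        ENNReal.measurable_ofReal.comp (measurable_norm.comp (hψmeas u))
      rw [hZ]
      calc (∫⁻ ω, ENNReal.ofReal ‖if ‖X i ω‖ ≤ u then X i ω else 0‖ ∂P)
          = ∫⁻ y, ENNReal.ofReal ‖if ‖y‖ ≤ u then y else 0‖ ∂(Measure.map (X i) P) :=
            (lintegral_map hφ (hXmeas i)).symm
        _ = ∫⁻ y, ENNReal.ofReal ‖if ‖y‖ ≤ u then y else 0‖ ∂(Measure.map (X 0) P) := by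
            rw [hXident i]
        _ = ∫⁻ ω, ENNReal.ofReal ‖if ‖X 0 ω‖ ≤ u then X 0 ω else 0‖ ∂P :=
            lintegral_map hφ (hXmeas 0)
    -- bound the single integral by the layer-cake bound and Karamata
    have hbound0 : (∫⁻ ω, ENNReal.ofReal ‖Z 0 ω‖ ∂P) ≤ C * (ENNReal.ofReal u * pE u) := by
      have hrw : ∀ ω, ‖Z 0 ω‖ = if ‖X 0 ω‖ ≤ u then ‖X 0 ω‖ else 0 := by
        intro ω
        by_cases h : ‖X 0 ω‖ ≤ u <;> simp [hZ, h]
      calc (∫⁻ ω, ENNReal.ofReal ‖Z 0 ω‖ ∂P)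
          = ∫⁻ ω, ENNReal.ofReal (if ‖X 0 ω‖ ≤ u then ‖X 0 ω‖ else 0) ∂P := by
            simp_rw [hrw]
        _ ≤ ∫⁻ t in Ioc (0:ℝ) u, P {ω | t < ‖X 0 ω‖} :=
            trunc_lintegral_le P (fun ω => ‖X 0 ω‖) (hXmeas 0).norm
              (fun ω => norm_nonneg _) u hu
        _ ≤ C * (ENNReal.ofReal u * pE u) := hC u han1
    -- total integral
    have hlin : (∫⁻ ω, S ω ∂P) ≤ (m : ENNReal) * (C * (ENNReal.ofReal u * pE u)) := by
      rw [hS]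
      calc (∫⁻ ω, ∑ i ∈ Finset.range m, ENNReal.ofReal ‖Z i ω‖ ∂P)
          = ∑ i ∈ Finset.range m, ∫⁻ ω, ENNReal.ofReal ‖Z i ω‖ ∂P :=
            lintegral_finset_sum _ (fun i _ => hZmeas i)
        _ = ∑ _i ∈ Finset.range m, ∫⁻ ω, ENNReal.ofReal ‖Z 0 ω‖ ∂P :=
            Finset.sum_congr rfl (fun i _ => heach i)
        _ = (m : ENNReal) * ∫⁻ ω, ENNReal.ofReal ‖Z 0 ω‖ ∂P := by
            rw [Finset.sum_const, Finset.card_range, nsmul_eq_mul]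
        _ ≤ (m : ENNReal) * (C * (ENNReal.ofReal u * pE u)) := mul_le_mul' le_rfl hbound0
    -- assemble and simplify
    set p : ℝ := (pE u).toReal with hpdef
    have hp0 : 0 ≤ p := ENNReal.toReal_nonneg
    have hnp : (n : ℝ) * p ≤ 2 * c * ε ^ (-α) := by
      rw [hpdef, hudef, mul_comm (a n) ε]
      exact han2
    have hmle : (m : ENNReal) ≤ ENNReal.ofReal ((n : ℝ) * T) := by
      rw [← ENNReal.ofReal_natCast]
      exact ENNReal.ofReal_le_ofReal (Nat.floor_le (by positivity))
    have hnum : (m : ENNReal) * (C * (ENNReal.ofReal u * pE u))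
        ≤ C * ENNReal.ofReal ((n : ℝ) * T * (u * p)) := by
      have hpEu : pE u = ENNReal.ofReal p := (ENNReal.ofReal_toReal (hpE_ne_top u)).symm
      calc (m : ENNReal) * (C * (ENNReal.ofReal u * pE u))
          ≤ ENNReal.ofReal ((n : ℝ) * T) * (C * (ENNReal.ofReal u * pE u)) := by
            gcongr
        _ = C * (ENNReal.ofReal ((n : ℝ) * T) * (ENNReal.ofReal u * ENNReal.ofReal p)) := by
            rw [hpEu]; ring
        _ = C * ENNReal.ofReal ((n : ℝ) * T * (u * p)) := by
            rw [← ENNReal.ofReal_mul hu.le, ← ENNReal.ofReal_mul (by positivity)]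
    have hdivle : (n : ℝ) * T * (u * p) / (δ * a n) ≤ T * ε / δ * (2 * c * ε ^ (-α)) := by
      have heq : (n : ℝ) * T * (u * p) / (δ * a n) = (T * ε / δ) * ((n : ℝ) * p) := by
        rw [hudef]
        field_simp
        rw [mul_right_comm (n : ℝ) (a n) p, mul_div_cancel_right₀ _ (ha_pos n).ne']
      rw [heq]
      exact mul_le_mul_of_nonneg_left hnp (by positivity)
    calc P {ω | ∃ k : ℕ, 1 ≤ k ∧ k ≤ m ∧
          δ < ‖(a n)⁻¹ • ∑ i ∈ Finset.range k, Z i ω‖}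
        ≤ (∫⁻ ω, S ω ∂P) / ENNReal.ofReal (δ * a n) := hmarkov
      _ ≤ (C * ENNReal.ofReal ((n : ℝ) * T * (u * p))) / ENNReal.ofReal (δ * a n) := by
          gcongr
          exact hlin.trans hnum
      _ = C * (ENNReal.ofReal ((n : ℝ) * T * (u * p)) / ENNReal.ofReal (δ * a n)) := by
          rw [mul_div_assoc]
      _ = C * ENNReal.ofReal ((n : ℝ) * T * (u * p) / (δ * a n)) := by
          rw [ENNReal.ofReal_div_of_pos hδa]
      _ ≤ C * ENNReal.ofReal (T * ε / δ * (2 * c * ε ^ (-α))) :=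
          mul_le_mul' le_rfl (ENNReal.ofReal_le_ofReal hdivle)
  -- the bounding function tends to 0 as ε → 0⁺
  have h1 : Tendsto (fun ε : ℝ => ε ^ (1 - α)) (nhdsWithin 0 (Set.Ioi 0)) (nhds 0) := by
    have hca : ContinuousAt (fun x : ℝ => x ^ (1 - α)) 0 :=
      Real.continuousAt_rpow_const 0 (1 - α) (Or.inr (by linarith))
    have h := (hca.continuousWithinAt (s := Set.Ioi (0:ℝ))).tendsto
    simpa [Real.zero_rpow (show (1:ℝ) - α ≠ 0 by linarith)] using h
  have hr : Tendsto (fun ε : ℝ => T * ε / δ * (2 * c * ε ^ (-α)))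
      (nhdsWithin 0 (Set.Ioi 0)) (nhds 0) := by
    have h2 : Tendsto (fun ε : ℝ => (2 * c * T / δ) * ε ^ (1 - α))
        (nhdsWithin 0 (Set.Ioi 0)) (nhds 0) := by
      simpa using h1.const_mul (2 * c * T / δ)
    refine h2.congr' ?_
    filter_upwards [self_mem_nhdsWithin] with ε hε
    have hε' : (0:ℝ) < ε := hε
    have hpow : ε ^ ((1:ℝ) - α) = ε * ε ^ (-α) := by
      rw [sub_eq_add_neg, Real.rpow_add hε', Real.rpow_one]
    rw [hpow]
    ring
  have hG : Tendsto (fun ε : ℝ => C * ENNReal.ofReal (T * ε / δ * (2 * c * ε ^ (-α))))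
      (nhdsWithin 0 (Set.Ioi 0)) (nhds 0) := by
    have h3 : Tendsto (fun ε : ℝ => ENNReal.ofReal (T * ε / δ * (2 * c * ε ^ (-α))))
        (nhdsWithin 0 (Set.Ioi 0)) (nhds 0) := by
      have := (ENNReal.continuous_ofReal.tendsto 0).comp hr
      simpa [Function.comp_def] using this
    have h4 := ENNReal.Tendsto.const_mul h3 (Or.inr hCtop)
    simpa using h4
  refine tendsto_of_tendsto_of_tendsto_of_le_of_le' tendsto_const_nhds hG ?_ ?_
  · exact Filter.Eventually.of_forall (fun ε => zero_le)
  · filter_upwards [self_mem_nhdsWithin] with ε hε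
    exact hkey ε hε
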